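/- Let q be an odd prime power, let A_1,…,A_m, B_1,…,B_m be multiplicative characters of F_q^*, and let λ ∈ F_q. Then _mF_m(A_1^2,…,A_m^2; B_1^2,…,B_m^2 | λ)_q + _mF_m(A_1^2,…,A_m^2; B_1^2,…,B_m^2 | −λ)_q = _{2m}F_{2m}(A_1, φA_1, A_2, φA_2, …, A_m, φA_m; B_1, φB_1, B_2, φB_2, …, B_m, φB_m | λ^2)_q. -/

import Mathlib

open Finset

section Aux

variable {F : Type} [Field F] [Fintype F]

lemma my_hEnough : HasEnoughRootsOfUnity ℂ (Monoid.exponent (MulChar F ℂ)ˣ) := by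
  have h : Monoid.exponent (MulChar F ℂ)ˣ ≠ 0 := Monoid.exponent_ne_zero_of_finite
  have : NeZero ((Monoid.exponent (MulChar F ℂ)ˣ : ℕ) : ℂ) := ⟨by exact_mod_cast h⟩
  infer_instance

lemma my_hEnough' : HasEnoughRootsOfUnity ℂ (Monoid.exponent Fˣ) := by
  have h : Monoid.exponent Fˣ ≠ 0 := Monoid.exponent_ne_zero_of_finite
  have : NeZero ((Monoid.exponent Fˣ : ℕ) : ℂ) := ⟨by exact_mod_cast h⟩
  infer_instance

lemma gaussSum_one_eq (θ : AddChar F ℂ) (hθ : θ ≠ 1) : gaussSum (1 : MulChar F ℂ) θ = -1 := by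
  classical
  have h0 : ∑ x : F, θ x = 0 := by
    refine AddChar.sum_eq_zero_iff_ne_zero.mpr ?_
    rw [← AddChar.one_eq_zero]; exact hθ
  have : gaussSum (1 : MulChar F ℂ) θ = ∑ x ∈ univ \ {0}, θ x := by
    rw [gaussSum, ← Finset.sum_subset (Finset.sdiff_subset)]
    · refine Finset.sum_congr rfl fun x hx => ?_
      simp only [mem_sdiff, mem_singleton, mem_univ, true_and] at hx
      rw [MulChar.one_apply (isUnit_iff_ne_zero.mpr hx), one_mul]
    · intro x _ hx
      simp only [mem_sdiff, mem_univ, true_and, mem_singleton, not_not] at hx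
      rw [hx, MulChar.map_nonunit _ (by simp : ¬ IsUnit (0:F)), zero_mul]
  rw [this, Finset.sum_sdiff_eq_sub (Finset.subset_univ _), h0, Finset.sum_singleton,
    AddChar.map_zero_eq_one]
  ring

variable (hodd : Odd (Fintype.card F))

include hodd in
lemma my_char_ne_two : ringChar F ≠ 2 := by
  intro h
  have := FiniteField.even_card_iff_char_two.mp h
  rcases hodd with ⟨k, hk⟩
  omega

include hodd in
lemma my_neg_one_ne_one : (-1 : F) ≠ 1 := by
  have := my_char_ne_two hodd
  intro h
  have h2 : (2 : F) = 0 := by linear_combination -h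
  exact (Ring.two_ne_zero this) h2

end Aux

section Quad

variable {F : Type} [Field F] [Fintype F] (hodd : Odd (Fintype.card F))
  {φ : MulChar F ℂ} (hφ : orderOf φ = 2)

include hφ in
lemma my_phi_sq : φ ^ 2 = 1 := by
  rw [← hφ]; exact pow_orderOf_eq_one φ

include hφ in
lemma my_phi_ne_one : φ ≠ 1 := by
  intro h
  rw [h, orderOf_one] at hφ
  omega

include hodd hφ in
lemma my_sq_eq_one_iff (τ : MulChar F ℂ) : τ ^ 2 = 1 ↔ τ = 1 ∨ τ = φ := by
  have hEnough := my_hEnough (F := F)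
  constructor
  · intro h
    by_cases h1 : τ = 1
    · exact Or.inl h1
    · refine Or.inr ?_
      -- transfer to Fˣ via a group isomorphism
      obtain ⟨e⟩ := MulChar.mulEquiv_units F ℂ
      have key : ∀ ψ : MulChar F ℂ, ψ ^ 2 = 1 → ψ ≠ 1 → e ψ = e φ := by
        intro ψ hψ2 hψ1
        have h2 : (e ψ) ^ 2 = 1 := by rw [← map_pow, hψ2, map_one]
        have h2' : (e φ) ^ 2 = 1 := by rw [← map_pow, my_phi_sq hφ, map_one]
        have hval : ∀ u : Fˣ, u ^ 2 = 1 → u ≠ 1 → (u : F) = -1 := by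
          intro u hu hu1
          have : (u : F) * (u : F) = 1 := by
            have := congrArg (Units.val) hu
            push_cast at this
            linear_combination this
          rcases mul_self_eq_one_iff.mp this with h | h
          · exact absurd (Units.ext h) hu1
          · exact h
        have hψne : e ψ ≠ 1 := by
          intro hc; exact hψ1 (by simpa using e.injective (by rw [hc, map_one]))
        have hφne : e φ ≠ 1 := by
          intro hc; exact (my_phi_ne_one hφ) (by simpa using e.injective (by rw [hc, map_one]))
        have := hval _ h2 hψne
        have h2'' := hval _ h2' hφne
        exact Units.ext (this.trans h2''.symm)
      exact e.injective (key τ h h1)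
  · rintro (rfl | rfl)
    · simp
    · exact my_phi_sq hφ

include hodd hφ in
lemma my_phi_eq_quad [DecidableEq F] : φ = (quadraticChar F).ringHomComp (Int.castRingHom ℂ) := by
  classical
  set q := (quadraticChar F).ringHomComp (Int.castRingHom ℂ) with hq
  have hq2 : q ^ 2 = 1 := by
    have : (quadraticChar F).IsQuadratic := quadraticChar_isQuadratic F
    exact (this.comp _).sq_eq_one
  have hqne : q ≠ 1 := by
    obtain ⟨a, ha⟩ := quadraticChar_exists_neg_one (my_char_ne_two hodd)
    intro hc
    have ha' : q a = -1 := by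
      simp only [hq, MulChar.ringHomComp_apply, ha]
      norm_num
    rw [hc] at ha'
    have haU : IsUnit a := by
      by_contra hna
      rw [MulChar.map_nonunit _ hna] at ha'
      norm_num at ha'
    rw [MulChar.one_apply haU] at ha'
    norm_num at ha'
  rcases (my_sq_eq_one_iff hodd hφ q).mp hq2 with h | h
  · exact absurd h hqne
  · exact h.symm

include hodd hφ in
lemma my_card_sqrts [DecidableEq F] (t : F) :
    ((univ.filter (fun u : F => u ^ 2 = t)).card : ℂ) = 1 + φ t := by
  classical
  have h := quadraticChar_card_sqrts (my_char_ne_two hodd) t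
  have hset : {x : F | x ^ 2 = t}.toFinset = univ.filter (fun u : F => u ^ 2 = t) := by
    ext x; simp
  rw [hset] at h
  have := congrArg (fun n : ℤ => (n : ℂ)) h
  push_cast at this
  rw [this, my_phi_eq_quad hodd hφ]
  simp only [MulChar.ringHomComp_apply, eq_intCast]
  ring

end Quad

section HD

variable {F : Type} [Field F] [Fintype F] (hodd : Odd (Fintype.card F))
  {φ : MulChar F ℂ} (hφ : orderOf φ = 2)

include hodd in
lemma my_four_ne : (4 : F) ≠ 0 := by
  have h2 : (2 : F) ≠ 0 := Ring.two_ne_zero (my_char_ne_two hodd)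
  intro h
  have : (2 : F) * 2 = 0 := by linear_combination h
  rcases mul_eq_zero.mp this with h' | h' <;> exact h2 h'

include hφ in
lemma my_phi_inv : φ⁻¹ = φ := by
  have h := my_phi_sq hφ
  rw [pow_two] at h
  exact inv_eq_of_mul_eq_one_right h

include hodd hφ in
lemma my_jacobi_dup {ψ : MulChar F ℂ} (hψ : ψ ≠ 1) :
    jacobiSum ψ ψ = ψ 4⁻¹ * jacobiSum φ ψ := by
  classical
  have h2 : (2 : F) ≠ 0 := Ring.two_ne_zero (my_char_ne_two hodd)
  have h4 : (4 : F) ≠ 0 := my_four_ne hodd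
  have hbij : Function.Bijective (fun u : F => (1 - u) / 2) := by
    refine Function.bijective_iff_has_inverse.mpr ⟨fun x => 1 - 2 * x, fun u => by field_simp; ring, fun x => by field_simp; ring⟩
  have step1 : jacobiSum ψ ψ = ∑ u : F, ψ ((1 - u) / 2) * ψ (1 - (1 - u) / 2) := by
    rw [jacobiSum]
    exact (Fintype.sum_bijective _ hbij _ _ (fun u => rfl)).symm
  have step2 : ∀ u : F, ψ ((1 - u) / 2) * ψ (1 - (1 - u) / 2) = ψ 4⁻¹ * ψ (1 - u ^ 2) := by
    intro u
    rw [← map_mul, ← map_mul]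
    congr 1
    field_simp
    ring
  have step3 : ∑ u : F, ψ (1 - u ^ 2)
      = ∑ t : F, ((univ.filter (fun u : F => u ^ 2 = t)).card : ℂ) * ψ (1 - t) := by
    rw [← Finset.sum_fiberwise univ (fun u : F => u ^ 2) (fun u => ψ (1 - u ^ 2))]
    refine Finset.sum_congr rfl fun t _ => ?_
    rw [Finset.sum_congr rfl (fun u hu => ?_), Finset.sum_const, nsmul_eq_mul]
    have := (Finset.mem_filter.mp hu).2
    rw [this]
  have hbij2 : Function.Bijective (fun t : F => 1 - t) := by
    refine Function.bijective_iff_has_inverse.mpr ⟨fun x => 1 - x, fun u => by ring, fun x => by ring⟩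
  have step4 : ∑ t : F, ψ (1 - t) = 0 := by
    rw [Fintype.sum_bijective _ hbij2 _ (fun x => ψ x) (fun u => rfl)]
    exact MulChar.sum_eq_zero_of_ne_one hψ
  calc jacobiSum ψ ψ = ∑ u : F, ψ 4⁻¹ * ψ (1 - u ^ 2) := by
        rw [step1]; exact Finset.sum_congr rfl fun u _ => step2 u
    _ = ψ 4⁻¹ * ∑ u : F, ψ (1 - u ^ 2) := by rw [Finset.mul_sum]
    _ = ψ 4⁻¹ * ∑ t : F, (1 + φ t) * ψ (1 - t) := by
        rw [step3]
        congr 1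
        exact Finset.sum_congr rfl fun t _ => by rw [my_card_sqrts hodd hφ]
    _ = ψ 4⁻¹ * jacobiSum φ ψ := by
        congr 1
        simp only [add_mul, one_mul, Finset.sum_add_distrib, step4, zero_add]
        rfl

variable (θ : AddChar F ℂ) (hθ : θ ≠ 1)

include hθ in
lemma my_g_ne (χ : MulChar F ℂ) : gaussSum χ θ ≠ 0 := by
  by_cases h : χ = 1
  · rw [h, gaussSum_one_eq θ hθ]; norm_num
  · exact gaussSum_ne_zero_of_nontrivial
      (Nat.cast_ne_zero.mpr Fintype.card_ne_zero) h (AddChar.IsPrimitive.of_ne_one hθ)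

include hodd hφ hθ in
lemma my_HD (ψ : MulChar F ℂ) :
    ψ 4 * (gaussSum ψ θ * gaussSum (φ * ψ) θ) = gaussSum (ψ ^ 2) θ * gaussSum φ θ := by
  have h2 : (2 : F) ≠ 0 := Ring.two_ne_zero (my_char_ne_two hodd)
  have h4 : (4 : F) ≠ 0 := my_four_ne hodd
  have h4u : IsUnit (4 : F) := isUnit_iff_ne_zero.mpr h4
  have h2u : IsUnit (2 : F) := isUnit_iff_ne_zero.mpr h2
  by_cases hψ1 : ψ = 1
  · subst hψ1
    rw [MulChar.one_apply h4u, mul_one, one_pow, gaussSum_one_eq θ hθ]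
    ring
  by_cases hψφ : ψ = φ
  · have hsq : ψ ^ 2 = 1 := by rw [hψφ]; exact my_phi_sq hφ
    have hψ4 : ψ 4 = 1 := by
      have h24 : (2 : F) * 2 = 4 := by norm_num
      calc ψ 4 = ψ 2 * ψ 2 := by rw [← map_mul, h24]
        _ = ψ 2 ^ 2 := by rw [pow_two]
        _ = (ψ ^ 2) 2 := (MulChar.pow_apply' ψ (two_ne_zero) 2).symm
        _ = 1 := by rw [hsq, MulChar.one_apply h2u]
    rw [hψ4, one_mul, hsq, gaussSum_one_eq θ hθ, hψφ, ← pow_two, my_phi_sq hφ,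
      gaussSum_one_eq θ hθ]
    ring
  -- main case
  have hψψ : ψ * ψ ≠ 1 := by
    intro h
    rcases (my_sq_eq_one_iff hodd hφ ψ).mp (by rwa [pow_two]) with h' | h'
    · exact hψ1 h'
    · exact hψφ h'
  have hφψ : φ * ψ ≠ 1 := by
    intro h
    have h1 : ψ = φ⁻¹ := by rw [eq_inv_iff_mul_eq_one, mul_comm]; exact h
    rw [my_phi_inv hφ] at h1
    exact hψφ h1
  have e1 := jacobiSum_mul_nontrivial hψψ θ
  have e2 := jacobiSum_mul_nontrivial hφψ θ
  have e3 := my_jacobi_dup hodd hφ hψ1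
  have e4 : ψ 4 * ψ 4⁻¹ = 1 := by
    rw [← map_mul, mul_inv_cancel₀ h4, MulChar.map_one]
  have hgψ : gaussSum ψ θ ≠ 0 := my_g_ne θ hθ ψ
  have key : (gaussSum (ψ ^ 2) θ * gaussSum φ θ) * gaussSum ψ θ
      = (ψ 4 * (gaussSum ψ θ * gaussSum (φ * ψ) θ)) * gaussSum ψ θ := by
    rw [pow_two]
    linear_combination (-(gaussSum (ψ * ψ) θ)) * e2
      + (ψ 4 * gaussSum (φ * ψ) θ) * e1
      - (ψ 4 * gaussSum (ψ * ψ) θ * gaussSum (φ * ψ) θ) * e3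
      - (gaussSum (ψ * ψ) θ * gaussSum (φ * ψ) θ * jacobiSum φ ψ) * e4
  exact (mul_right_cancel₀ hgψ key).symm

end HD


section Square

variable {F : Type} [Field F] [Fintype F] (hodd : Odd (Fintype.card F))
  {φ : MulChar F ℂ} (hφ : orderOf φ = 2) [Fintype (MulChar F ℂ)]

lemma my_apply_neg_one (ψ : MulChar F ℂ) : ψ (-1) = 1 ∨ ψ (-1) = -1 := by
  have : ψ (-1) * ψ (-1) = 1 := by
    rw [← map_mul, neg_one_mul, neg_neg, MulChar.map_one]
  exact mul_self_eq_one_iff.mp this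

lemma my_sum_chars {a : F} (ha : a ≠ 1) : ∑ χ : MulChar F ℂ, χ a = 0 := by
  have hEnough' := my_hEnough' (F := F)
  obtain ⟨χ₀, hχ₀⟩ := MulChar.exists_apply_ne_one_of_hasEnoughRootsOfUnity F ℂ ha
  have hbij : Function.Bijective (fun χ : MulChar F ℂ => χ₀ * χ) :=
    (Group.mulLeft_bijective χ₀)
  have h1 : ∑ χ : MulChar F ℂ, (χ₀ * χ) a = ∑ χ : MulChar F ℂ, χ a :=
    Fintype.sum_bijective _ hbij _ _ (fun χ => rfl)
  have h2 : ∑ χ : MulChar F ℂ, (χ₀ * χ) a = χ₀ a * ∑ χ : MulChar F ℂ, χ a := by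
    rw [Finset.mul_sum]
    exact Finset.sum_congr rfl fun χ _ => MulChar.mul_apply χ₀ χ a
  have : (χ₀ a - 1) * ∑ χ : MulChar F ℂ, χ a = 0 := by
    rw [sub_mul, one_mul, ← h2, h1, sub_self]
  rcases mul_eq_zero.mp this with h | h
  · exact absurd (sub_eq_zero.mp h) hχ₀
  · exact h

include hodd hφ in
lemma my_fiber_card (χ₀ : MulChar F ℂ) :
    (univ.filter (fun χ : MulChar F ℂ => χ ^ 2 = χ₀ ^ 2)).card = 2 := by
  classical
  have hset : univ.filter (fun χ : MulChar F ℂ => χ ^ 2 = χ₀ ^ 2) = {χ₀, φ * χ₀} := by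
    ext χ
    simp only [mem_filter, mem_univ, true_and, mem_insert, mem_singleton]
    constructor
    · intro h
      have h' : (χ * χ₀⁻¹) ^ 2 = 1 := by
        rw [mul_pow, h, inv_pow, mul_inv_cancel]
      rcases (my_sq_eq_one_iff hodd hφ _).mp h' with h'' | h''
      · left
        have := mul_inv_eq_one.mp h''
        exact this
      · right
        have hx : χ = (χ * χ₀⁻¹) * χ₀ := by group
        rw [hx, h'']
    · rintro (rfl | rfl)
      · rfl
      · rw [mul_pow, my_phi_sq hφ, one_mul]
  rw [hset]
  rw [Finset.card_insert_of_notMem, Finset.card_singleton]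
  simp only [mem_singleton]
  intro h
  exact (my_phi_ne_one hφ) (mul_eq_right.mp h.symm)

include hodd hφ in
lemma my_even_is_square {ψ : MulChar F ℂ} (h1 : ψ (-1) = 1) :
    ∃ χ : MulChar F ℂ, χ ^ 2 = ψ := by
  classical
  set Sq : Finset (MulChar F ℂ) := univ.image (fun χ => χ ^ 2) with hSq
  set E : Finset (MulChar F ℂ) := univ.filter (fun ψ : MulChar F ℂ => ψ (-1) = 1) with hE
  have hSqE : Sq ⊆ E := by
    intro b hb
    obtain ⟨χ, _, rfl⟩ := Finset.mem_image.mp hb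
    simp only [hE, mem_filter, mem_univ, true_and]
    rw [MulChar.pow_apply' χ two_ne_zero, pow_two, ← map_mul, neg_one_mul, neg_neg,
      MulChar.map_one]
  have hcard1 : Fintype.card (MulChar F ℂ) = 2 * Sq.card := by
    have := Finset.card_eq_sum_card_image (fun χ : MulChar F ℂ => χ ^ 2) univ
    rw [Finset.card_univ] at this
    rw [this, ← hSq]
    rw [Finset.sum_congr rfl (fun b hb => ?_), Finset.sum_const, smul_eq_mul, mul_comm]
    obtain ⟨χ₀, _, rfl⟩ := Finset.mem_image.mp hb
    exact my_fiber_card hodd hφ χ₀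
  have hsum : ∑ χ : MulChar F ℂ, χ (-1) = 0 :=
    my_sum_chars (my_neg_one_ne_one hodd)
  have hsplit : (E.card : ℂ) - ((Fintype.card (MulChar F ℂ) : ℂ) - E.card) = 0 := by
    have h1' : ∑ χ ∈ E, χ (-1) = (E.card : ℂ) := by
      rw [Finset.sum_congr rfl (fun χ hχ => (Finset.mem_filter.mp hχ).2), Finset.sum_const,
        nsmul_eq_mul, mul_one]
    have h2' : ∑ χ ∈ univ \ E, χ (-1) = -(((univ \ E).card : ℂ)) := by
      rw [Finset.sum_congr rfl (fun χ hχ => ?_), Finset.sum_const, nsmul_eq_mul, mul_neg_one]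
      have hne := (Finset.mem_sdiff.mp hχ).2
      simp only [hE, mem_filter, mem_univ, true_and] at hne
      rcases my_apply_neg_one χ with h | h
      · exact absurd h hne
      · exact h
    have hsd : ((univ \ E).card : ℂ) = (Fintype.card (MulChar F ℂ) : ℂ) - E.card := by
      rw [Finset.card_sdiff_of_subset (Finset.subset_univ E)]
      rw [Nat.cast_sub (Finset.card_le_card (Finset.subset_univ E))]
      rw [Finset.card_univ]
    have := Finset.sum_sdiff_eq_sub (Finset.subset_univ E) (f := fun χ : MulChar F ℂ => χ (-1))
    rw [hsum, h1', h2', hsd] at this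
    linear_combination this
  have hEcard : (E.card : ℂ) = (Sq.card : ℂ) := by
    have hG : (Fintype.card (MulChar F ℂ) : ℂ) = 2 * Sq.card := by
      exact_mod_cast congrArg (Nat.cast : ℕ → ℂ) hcard1
    linear_combination (1/2 : ℂ) * hsplit + (1/2 : ℂ) * hG
  have hEcard' : E.card = Sq.card := by exact_mod_cast hEcard
  have hEq : Sq = E := Finset.eq_of_subset_of_card_le hSqE (le_of_eq hEcard')
  have hmem : ψ ∈ E := by simp only [hE, mem_filter, mem_univ, true_and]; exact h1
  rw [← hEq] at hmem
  obtain ⟨χ, _, hχ⟩ := Finset.mem_image.mp hmem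
  exact ⟨χ, hχ⟩

end Square

section Combine

variable {F : Type} [Field F] [Fintype F] (hodd : Odd (Fintype.card F))
  {φ : MulChar F ℂ} (hφ : orderOf φ = 2) (θ : AddChar F ℂ) (hθ : θ ≠ 1)

include hodd hφ hθ in
lemma my_combineA (C χ : MulChar F ℂ) :
    (gaussSum (C * χ) θ / gaussSum C θ) * (gaussSum (C * φ * χ) θ / gaussSum (C * φ) θ)
      = (χ 4)⁻¹ * (gaussSum (C ^ 2 * χ ^ 2) θ / gaussSum (C ^ 2) θ) := by
  have h4 : (4 : F) ≠ 0 := my_four_ne hodd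
  have hv : χ 4 ≠ 0 := by
    refine left_ne_zero_of_mul_eq_one (b := χ 4⁻¹) ?_
    rw [← map_mul, mul_inv_cancel₀ h4, MulChar.map_one]
  have hu : C 4 ≠ 0 := by
    refine left_ne_zero_of_mul_eq_one (b := C 4⁻¹) ?_
    rw [← map_mul, mul_inv_cancel₀ h4, MulChar.map_one]
  have h1 := my_HD hodd hφ θ hθ (C * χ)
  have h2 := my_HD hodd hφ θ hθ C
  rw [show φ * (C * χ) = C * φ * χ by rw [← mul_assoc, mul_comm φ C]] at h1
  rw [show φ * C = C * φ from mul_comm φ C] at h2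
  rw [MulChar.mul_apply, mul_pow] at h1
  have key : χ 4 * (gaussSum (C * χ) θ * gaussSum (C * φ * χ) θ) * gaussSum (C ^ 2) θ
      = (gaussSum C θ * gaussSum (C * φ) θ) * gaussSum (C ^ 2 * χ ^ 2) θ := by
    apply mul_left_cancel₀ hu
    linear_combination gaussSum (C ^ 2) θ * h1 - gaussSum (C ^ 2 * χ ^ 2) θ * h2
  have hb1 : gaussSum C θ ≠ 0 := my_g_ne θ hθ C
  have hb2 : gaussSum (C * φ) θ ≠ 0 := my_g_ne θ hθ _
  have hQ : gaussSum (C ^ 2) θ ≠ 0 := my_g_ne θ hθ _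
  field_simp
  linear_combination key

include hodd hφ hθ in
lemma my_combineB (C χ : MulChar F ℂ) :
    (gaussSum ((C * χ)⁻¹) θ / gaussSum (C⁻¹) θ)
        * (gaussSum ((C * φ * χ)⁻¹) θ / gaussSum ((C * φ)⁻¹) θ)
      = χ 4 * (gaussSum ((C ^ 2 * χ ^ 2)⁻¹) θ / gaussSum ((C ^ 2)⁻¹) θ) := by
  have h := my_combineA hodd hφ θ hθ C⁻¹ χ⁻¹
  have hχ4 : (χ⁻¹) 4 = (χ 4)⁻¹ := MulChar.inv_apply_eq_inv' χ 4
  rw [hχ4, inv_inv] at h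
  rw [mul_inv (C * φ) χ, mul_inv C φ, my_phi_inv hφ, mul_inv C χ,
    mul_inv (C ^ 2) (χ ^ 2), ← inv_pow C 2, ← inv_pow χ 2]
  exact h

end Combine

section Main

variable {F : Type} [Field F] [Fintype F]

/-- Summand of the `m`-variable side. -/
noncomputable def myS (θ : AddChar F ℂ) {m : ℕ} (A B : Fin m → MulChar F ℂ) (lam : F)
    (ψ : MulChar F ℂ) : ℂ :=
  (∏ i, (gaussSum (A i ^ 2 * ψ) θ / gaussSum (A i ^ 2) θ) *
    (gaussSum ((B i ^ 2 * ψ)⁻¹) θ / gaussSum ((B i ^ 2)⁻¹) θ)) * ψ (-1) ^ m * ψ lam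

/-- Summand of the `2m`-variable side. -/
noncomputable def myT (θ : AddChar F ℂ) (φ : MulChar F ℂ) {m : ℕ} (A B : Fin m → MulChar F ℂ)
    (lam : F) (χ : MulChar F ℂ) : ℂ :=
  (∏ p : Fin m × Fin 2,
      (gaussSum (A p.1 * φ ^ (p.2 : ℕ) * χ) θ / gaussSum (A p.1 * φ ^ (p.2 : ℕ)) θ) *
        (gaussSum ((B p.1 * φ ^ (p.2 : ℕ) * χ)⁻¹) θ / gaussSum ((B p.1 * φ ^ (p.2 : ℕ))⁻¹) θ)) *
    χ (-1) ^ (m * 2) * χ (lam ^ 2)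

variable (hodd : Odd (Fintype.card F)) {φ : MulChar F ℂ} (hφ : orderOf φ = 2)
  (θ : AddChar F ℂ) (hθ : θ ≠ 1)

include hodd hφ hθ in
lemma my_pointwise {m : ℕ} (A B : Fin m → MulChar F ℂ) (lam : F) (χ : MulChar F ℂ) :
    myT θ φ A B lam χ = (1 / 2 : ℂ) * (myS θ A B lam (χ ^ 2) + myS θ A B (-lam) (χ ^ 2)) := by
  have h4 : (4 : F) ≠ 0 := my_four_ne hodd
  have hv : χ 4 ≠ 0 := by
    refine left_ne_zero_of_mul_eq_one (b := χ 4⁻¹) ?_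
    rw [← map_mul, mul_inv_cancel₀ h4, MulChar.map_one]
  have hneg1sq : χ (-1) ^ 2 = 1 := by
    rw [pow_two, ← map_mul, neg_one_mul, neg_neg, MulChar.map_one]
  have heven : (χ ^ 2) (-1) = 1 := by
    rw [MulChar.pow_apply' χ two_ne_zero]; exact hneg1sq
  have hml : χ (-1) ^ (m * 2) = 1 := by
    rw [mul_comm m 2, pow_mul, hneg1sq, one_pow]
  have hlam2 : χ (lam ^ 2) = (χ ^ 2) lam := by
    rw [MulChar.pow_apply' χ two_ne_zero, map_pow]
  have hzneg : (χ ^ 2) (-lam) = (χ ^ 2) lam := by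
    rw [show (-lam : F) = (-1) * lam by ring, map_mul, heven, one_mul]
  have hprod : (∏ p : Fin m × Fin 2,
      (gaussSum (A p.1 * φ ^ (p.2 : ℕ) * χ) θ / gaussSum (A p.1 * φ ^ (p.2 : ℕ)) θ) *
        (gaussSum ((B p.1 * φ ^ (p.2 : ℕ) * χ)⁻¹) θ / gaussSum ((B p.1 * φ ^ (p.2 : ℕ))⁻¹) θ))
      = ∏ i : Fin m, (gaussSum (A i ^ 2 * χ ^ 2) θ / gaussSum (A i ^ 2) θ) *
          (gaussSum ((B i ^ 2 * χ ^ 2)⁻¹) θ / gaussSum ((B i ^ 2)⁻¹) θ) := by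
    rw [Fintype.prod_prod_type]
    refine Finset.prod_congr rfl fun i _ => ?_
    rw [Fin.prod_univ_two]
    simp only [Fin.val_zero, pow_zero, mul_one, Fin.val_one, pow_one]
    have hA := my_combineA hodd hφ θ hθ (A i) χ
    have hB := my_combineB hodd hφ θ hθ (B i) χ
    calc (gaussSum (A i * χ) θ / gaussSum (A i) θ) *
          (gaussSum ((B i * χ)⁻¹) θ / gaussSum ((B i)⁻¹) θ) *
        ((gaussSum (A i * φ * χ) θ / gaussSum (A i * φ) θ) *
          (gaussSum ((B i * φ * χ)⁻¹) θ / gaussSum ((B i * φ)⁻¹) θ))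
        = ((gaussSum (A i * χ) θ / gaussSum (A i) θ) *
            (gaussSum (A i * φ * χ) θ / gaussSum (A i * φ) θ)) *
          ((gaussSum ((B i * χ)⁻¹) θ / gaussSum ((B i)⁻¹) θ) *
            (gaussSum ((B i * φ * χ)⁻¹) θ / gaussSum ((B i * φ)⁻¹) θ)) := by ring
      _ = ((χ 4)⁻¹ * (gaussSum (A i ^ 2 * χ ^ 2) θ / gaussSum (A i ^ 2) θ)) *
          (χ 4 * (gaussSum ((B i ^ 2 * χ ^ 2)⁻¹) θ / gaussSum ((B i ^ 2)⁻¹) θ)) := by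
            rw [hA, hB]
      _ = ((χ 4)⁻¹ * χ 4) * ((gaussSum (A i ^ 2 * χ ^ 2) θ / gaussSum (A i ^ 2) θ) *
            (gaussSum ((B i ^ 2 * χ ^ 2)⁻¹) θ / gaussSum ((B i ^ 2)⁻¹) θ)) := by ring
      _ = (gaussSum (A i ^ 2 * χ ^ 2) θ / gaussSum (A i ^ 2) θ) *
            (gaussSum ((B i ^ 2 * χ ^ 2)⁻¹) θ / gaussSum ((B i ^ 2)⁻¹) θ) := by
            rw [inv_mul_cancel₀ hv, one_mul]
  rw [myT, myS, myS, hprod, hml, hlam2, hzneg, heven]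
  ring

include hodd hφ hθ in
lemma my_main {m : ℕ} (A B : Fin m → MulChar F ℂ) (lam : F) [Fintype (MulChar F ℂ)] :
    ∑ χ : MulChar F ℂ, (myS θ A B lam χ + myS θ A B (-lam) χ)
      = ∑ χ : MulChar F ℂ, myT θ φ A B lam χ := by
  classical
  set σ : MulChar F ℂ → ℂ := fun ψ => myS θ A B lam ψ + myS θ A B (-lam) ψ with hσ
  have hvanish : ∀ ψ : MulChar F ℂ, ψ (-1) = -1 → σ ψ = 0 := by
    intro ψ hψ
    have hz : ψ (-lam) = -(ψ lam) := by
      rw [show (-lam : F) = (-1) * lam by ring, map_mul, hψ, neg_one_mul]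
    simp only [hσ, myS, hz]
    ring
  have hsum2 : ∑ χ : MulChar F ℂ, σ (χ ^ 2) = 2 * ∑ ψ : MulChar F ℂ, σ ψ := by
    rw [Finset.sum_comp σ (fun χ : MulChar F ℂ => χ ^ 2)]
    have h1 : ∀ b ∈ univ.image (fun χ : MulChar F ℂ => χ ^ 2),
        (univ.filter fun a : MulChar F ℂ => a ^ 2 = b).card • σ b = 2 * σ b := by
      intro b hb
      obtain ⟨χ₀, _, rfl⟩ := Finset.mem_image.mp hb
      rw [my_fiber_card hodd hφ χ₀]
      rw [nsmul_eq_mul]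
      norm_num
    rw [Finset.sum_congr rfl h1, ← Finset.mul_sum]
    congr 1
    refine Finset.sum_subset (Finset.subset_univ _) ?_
    intro b _ hb
    rcases my_apply_neg_one b with h | h
    · exfalso
      obtain ⟨χ, hχ⟩ := my_even_is_square hodd hφ h
      exact hb (Finset.mem_image.mpr ⟨χ, Finset.mem_univ χ, hχ⟩)
    · exact hvanish b h
  calc ∑ χ : MulChar F ℂ, σ χ
      = (1 / 2 : ℂ) * (2 * ∑ χ : MulChar F ℂ, σ χ) := by ring
    _ = (1 / 2 : ℂ) * ∑ χ : MulChar F ℂ, σ (χ ^ 2) := by rw [hsum2]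
    _ = ∑ χ : MulChar F ℂ, (1 / 2 : ℂ) * σ (χ ^ 2) := by rw [Finset.mul_sum]
    _ = ∑ χ : MulChar F ℂ, myT θ φ A B lam χ := by
        refine Finset.sum_congr rfl fun χ _ => ?_
        rw [my_pointwise hodd hφ θ hθ A B lam χ]

end Main

/-- The finite field hypergeometric function `ₘFₘ` of McCarthy, with upper parameters `A`,
lower parameters `B` (indexed by a finite type `ι`), and argument `lam`. -/
noncomputable def ffHyp {F : Type} [Field F] [Fintype F] (θ : AddChar F ℂ)
    {ι : Type} [Fintype ι] (A B : ι → MulChar F ℂ) (lam : F) : ℂ :=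
  letI : Fintype (MulChar F ℂ) := Fintype.ofFinite _
  (-1 : ℂ) / ((Fintype.card F : ℂ) - 1) *
    ∑ χ : MulChar F ℂ,
      (∏ i, (gaussSum (A i * χ) θ / gaussSum (A i) θ) *
        (gaussSum ((B i * χ)⁻¹) θ / gaussSum ((B i)⁻¹) θ)) *
      χ (-1) ^ (Fintype.card ι) * χ lam

theorem stmt3 {F : Type} [Field F] [Fintype F] (hodd : Odd (Fintype.card F))
    (θ : AddChar F ℂ) (hθ : θ ≠ 1)
    (φ : MulChar F ℂ) (hφ : orderOf φ = 2)
    (m : ℕ) (hm : 0 < m) (A B : Fin m → MulChar F ℂ) (lam : F) :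
    ffHyp θ (fun i => A i ^ 2) (fun i => B i ^ 2) lam
        + ffHyp θ (fun i => A i ^ 2) (fun i => B i ^ 2) (-lam)
      = ffHyp θ (fun p : Fin m × Fin 2 => A p.1 * φ ^ (p.2 : ℕ))
          (fun p : Fin m × Fin 2 => B p.1 * φ ^ (p.2 : ℕ)) (lam ^ 2) := by
  classical
  letI fI : Fintype (MulChar F ℂ) := Fintype.ofFinite _
  unfold ffHyp
  rw [← mul_add]
  congr 1
  rw [← Finset.sum_add_distrib]
  simp only [Fintype.card_fin, Fintype.card_prod]
  exact my_main hodd hφ θ hθ A B lam
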